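/- Let A be a commutative ring, and let a ∈ A be a non-zero-divisor. In the polynomial ring A[X,Y], consider the ideal I = (aX − p, pY − a, XY − 1), where p ∈ A. If f(X,Y) = Σ_i c_i X^i + Σ_j d_j Y^j ∈ I (with no mixed monomials X^iY^j, i,j ≥ 1), then there exist polynomials u(X), v(Y) ∈ A[X,Y] with f(X,Y) = u(X)(aX − p) + v(Y)(pY − a). -/

import Mathlib

open Polynomial LaurentPolynomial in
private lemma my_aeval_T_one {A : Type*} [CommRing A] (c : Polynomial A) :
    Polynomial.aeval (T 1 : LaurentPolynomial A) c = toLaurent c := by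
  have h : (Polynomial.aeval (T 1 : LaurentPolynomial A) : Polynomial A →ₐ[A] _)
      = toLaurentAlg := by
    apply Polynomial.algHom_ext
    simp [toLaurentAlg_apply]
  rw [show Polynomial.aeval (T 1 : LaurentPolynomial A) c
      = (Polynomial.aeval (T 1 : LaurentPolynomial A) : Polynomial A →ₐ[A] _) c from rfl,
    h, toLaurentAlg_apply]

open Polynomial in
private lemma my_reflect_sub {A : Type*} [CommRing A] (f g : Polynomial A) (N : ℕ) :
    reflect N (f - g) = reflect N f - reflect N g := by
  ext i
  simp [coeff_reflect]

open Polynomial in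
private lemma my_reflect_reflect {A : Type*} [CommRing A] (d : Polynomial A) (N : ℕ) :
    reflect N (reflect N d) = d := by
  ext i
  simp [coeff_reflect, revAt_invol]

open Polynomial LaurentPolynomial in
private lemma my_aeval_T_neg_one {A : Type*} [CommRing A] (d : Polynomial A) (N : ℕ)
    (hd : d.natDegree ≤ N) :
    Polynomial.aeval (T (-1) : LaurentPolynomial A) d * T (N : ℤ)
      = toLaurent (reflect N d) := by
  rw [d.as_sum_range' (N+1) (Nat.lt_succ_of_le hd)]
  rw [map_sum, Finset.sum_mul,
    show reflect N (∑ i ∈ Finset.range (N+1), Polynomial.monomial i (d.coeff i))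
      = ∑ i ∈ Finset.range (N+1), reflect N (Polynomial.monomial i (d.coeff i)) from by
      ext j; simp [coeff_reflect, Polynomial.finset_sum_coeff],
    map_sum]
  refine Finset.sum_congr rfl (fun i hi => ?_)
  have hiN : i ≤ N := Nat.lt_succ_iff.mp (Finset.mem_range.mp hi)
  rw [Polynomial.aeval_monomial, ← Polynomial.C_mul_X_pow_eq_monomial, reflect_C_mul,
    reflect_monomial, revAt_le hiN, Polynomial.C_mul_X_pow_eq_monomial,
    Polynomial.toLaurent_C_mul_T, T_pow, ← LaurentPolynomial.C_eq_algebraMap, mul_assoc, ← T_add]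
  congr 1
  congr 1
  push_cast [hiN]
  ring

open MvPolynomial

/-- Let `A` be a commutative ring and `a ∈ A` a non-zero-divisor. In `A[X,Y]` consider the ideal
`I = (aX − p, pY − a, XY − 1)`.  If `f(X,Y) = Σ_i c_i X^i + Σ_j d_j Y^j ∈ I` (no mixed monomials),
then `f` can be written `u(X)(aX − p) + v(Y)(pY − a)` with `u` a polynomial in `X` only and `v` a
polynomial in `Y` only. -/
theorem no_mixed_terms_ideal_membership (A : Type*) [CommRing A] (p a : A)
    (ha : ∀ x : A, a * x = 0 → x = 0)
    (f : MvPolynomial (Fin 2) A)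
    (c d : Polynomial A)
    (hf : f = Polynomial.aeval (X 0 : MvPolynomial (Fin 2) A) c
        + Polynomial.aeval (X 1 : MvPolynomial (Fin 2) A) d)
    (hfI : f ∈ Ideal.span ({C a * X 0 - C p, C p * X 1 - C a, X 0 * X 1 - 1} :
        Set (MvPolynomial (Fin 2) A))) :
    ∃ u v : Polynomial A,
      f = Polynomial.aeval (X 0 : MvPolynomial (Fin 2) A) u * (C a * X 0 - C p)
        + Polynomial.aeval (X 1 : MvPolynomial (Fin 2) A) v * (C p * X 1 - C a) := by
  classical
  obtain hS | hN := subsingleton_or_nontrivial A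
  · exact ⟨0, 0, Subsingleton.elim _ _⟩
  -- Step 1: a representation of f as combination of the generators
  rw [show ({C a * X 0 - C p, C p * X 1 - C a, X 0 * X 1 - 1} :
        Set (MvPolynomial (Fin 2) A))
      = insert (C a * X 0 - C p) (insert (C p * X 1 - C a) {X 0 * X 1 - 1}) from rfl,
    Ideal.mem_span_insert] at hfI
  obtain ⟨q1, z1, hz1, hF1⟩ := hfI
  rw [Ideal.mem_span_insert] at hz1
  obtain ⟨q2, z2, hz2, hF2⟩ := hz1
  rw [Ideal.mem_span_singleton] at hz2
  obtain ⟨q3, hF3⟩ := hz2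
  have hrep : f = q1 * (C a * X 0 - C p) + q2 * (C p * X 1 - C a)
      + (X 0 * X 1 - 1) * q3 := by
    rw [hF1, hF2, hF3]; ring
  clear hF1 hF2 hF3
  -- Step 2: map to Laurent polynomials
  set φ : MvPolynomial (Fin 2) A →ₐ[A] LaurentPolynomial A :=
    MvPolynomial.aeval (fun i : Fin 2 => if i = 0 then LaurentPolynomial.T 1
      else LaurentPolynomial.T (-1)) with hφ
  have hX0 : φ (X 0) = LaurentPolynomial.T 1 := by simp [hφ]
  have hX1 : φ (X 1) = LaurentPolynomial.T (-1) := by simp [hφ]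
  have hT11 : (LaurentPolynomial.T (-1) * LaurentPolynomial.T 1 : LaurentPolynomial A) = 1 := by
    rw [← LaurentPolynomial.T_add]; norm_num
  have hCa : φ (C a) = LaurentPolynomial.C a := by
    simp [hφ, MvPolynomial.algebraMap_eq, LaurentPolynomial.algebraMap_apply]
  have hCp : φ (C p) = LaurentPolynomial.C p := by
    simp [hφ, MvPolynomial.algebraMap_eq, LaurentPolynomial.algebraMap_apply]
  set Q : LaurentPolynomial A := φ q1 - LaurentPolynomial.T (-1) * φ q2 with hQdef
  set G : LaurentPolynomial A :=
    LaurentPolynomial.C a * LaurentPolynomial.T 1 - LaurentPolynomial.C p with hGdef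
  have hQG : φ f = Q * G := by
    rw [hrep]
    simp only [map_add, map_mul, map_sub, map_one, hX0, hX1, hCa, hCp, hQdef, hGdef]
    linear_combination (φ q2 * LaurentPolynomial.C a + φ q3) * hT11
  obtain ⟨m, H, hH⟩ := LaurentPolynomial.exists_T_pow Q
  set N : ℕ := max m d.natDegree + 1 with hNdef
  have hmN : m ≤ N := by omega
  have hdN : d.natDegree ≤ N := by
    have := le_max_right m d.natDegree; omega
  have hN1 : 1 ≤ N := by omega
  have hφf : φ f = Polynomial.toLaurent c + Polynomial.aeval (LaurentPolynomial.T (-1)) d := by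
    rw [hf, map_add, ← Polynomial.aeval_algHom_apply, ← Polynomial.aeval_algHom_apply, hX0, hX1,
      my_aeval_T_one]
  have hTm : (LaurentPolynomial.T (m : ℤ) * LaurentPolynomial.T ((N - m : ℕ) : ℤ)
      : LaurentPolynomial A) = LaurentPolynomial.T (N : ℤ) := by
    rw [← LaurentPolynomial.T_add]; congr 1; omega
  have hkey : Polynomial.toLaurent (c * Polynomial.X ^ N + Polynomial.reflect N d)
      = Polynomial.toLaurent (H * Polynomial.X ^ (N - m)
          * (Polynomial.C a * Polynomial.X - Polynomial.C p)) := by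
    have h1 : Polynomial.toLaurent c * LaurentPolynomial.T (N : ℤ)
        + Polynomial.aeval (LaurentPolynomial.T (-1)) d * LaurentPolynomial.T (N : ℤ)
        = Q * G * LaurentPolynomial.T (N : ℤ) := by
      rw [← add_mul, ← hφf, hQG]
    rw [map_add, map_mul, map_mul, Polynomial.toLaurent_X_pow,
      ← my_aeval_T_neg_one d N hdN, map_mul, Polynomial.toLaurent_X_pow, hH, map_sub, map_mul,
      Polynomial.toLaurent_C, Polynomial.toLaurent_C, Polynomial.toLaurent_X]
    linear_combination h1 - Q * G * hTm
  have hpoly := Polynomial.toLaurent_injective hkey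
  set L : Polynomial A := Polynomial.C a * Polynomial.X - Polynomial.C p with hLdef
  set e : Polynomial A := Polynomial.reflect N d with hedef
  set G' : Polynomial A := H * Polynomial.X ^ (N - m) with hG'def
  have hmonic : (Polynomial.X ^ N : Polynomial A).Monic := Polynomial.monic_X_pow N
  set Hr : Polynomial A := G' %ₘ Polynomial.X ^ N with hHrdef
  set Hq : Polynomial A := G' /ₘ Polynomial.X ^ N with hHqdef
  have hGdec : Hr + Polynomial.X ^ N * Hq = G' := Polynomial.modByMonic_add_div G' (Polynomial.X ^ N)
  have hD : Polynomial.X ^ N * (c - Hq * L) = Hr * L - e := by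
    linear_combination hpoly - L * hGdec
  have hdegL : L.natDegree ≤ 1 := by
    refine le_trans (Polynomial.natDegree_sub_le _ _) (max_le ?_ ?_)
    · exact le_trans (Polynomial.natDegree_C_mul_le a Polynomial.X) Polynomial.natDegree_X_le
    · simp
  have hdegHr : Hr.natDegree ≤ N - 1 := by
    by_cases h0 : Hr = 0
    · simp [h0]
    · have hlt : Hr.degree < (Polynomial.X ^ N : Polynomial A).degree :=
        Polynomial.degree_modByMonic_lt G' hmonic
      rw [Polynomial.degree_X_pow] at hlt
      have := (Polynomial.natDegree_lt_iff_degree_lt h0).mpr hlt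
      omega
  have hdegHrL : (Hr * L).natDegree ≤ N := by
    refine le_trans Polynomial.natDegree_mul_le ?_
    omega
  have hdege : e.natDegree ≤ N := by
    rw [Polynomial.natDegree_le_iff_coeff_eq_zero]
    intro i hi
    rw [hedef, Polynomial.coeff_reflect, Polynomial.revAt_eq_self_of_lt hi]
    exact Polynomial.coeff_eq_zero_of_natDegree_lt (by omega)
  have hdegD : (Hr * L - e).natDegree ≤ N :=
    le_trans (Polynomial.natDegree_sub_le _ _) (max_le hdegHrL hdege)
  have hgC : c - Hq * L = Polynomial.C ((c - Hq * L).coeff 0) := by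
    apply Polynomial.eq_C_of_natDegree_le_zero
    rw [Polynomial.natDegree_le_iff_coeff_eq_zero]
    intro i hi
    have h1 : (Polynomial.X ^ N * (c - Hq * L)).coeff (i + N) = (c - Hq * L).coeff i :=
      Polynomial.coeff_X_pow_mul _ N i
    rw [hD] at h1
    rw [← h1]
    exact Polynomial.coeff_eq_zero_of_natDegree_lt (by omega)
  set lam : A := (c - Hq * L).coeff 0 with hlam
  have hc : c = Hq * L + Polynomial.C lam := by linear_combination hgC
  have he : e = Hr * L - Polynomial.X ^ N * Polynomial.C lam := by
    linear_combination hD - Polynomial.X ^ N * hgC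
  have hrefl1L : Polynomial.reflect 1 L = Polynomial.C a - Polynomial.C p * Polynomial.X := by
    rw [hLdef, show (Polynomial.C a * Polynomial.X : Polynomial A)
        = Polynomial.C a * Polynomial.X ^ 1 from by ring, my_reflect_sub,
      Polynomial.reflect_C_mul, Polynomial.reflect_monomial, Polynomial.reflect_C]
    simp [Polynomial.revAt_le]
  have hreflHrL : Polynomial.reflect N (Hr * L)
      = Polynomial.reflect (N - 1) Hr * Polynomial.reflect 1 L := by
    have h2 := Polynomial.reflect_mul (f := Hr) (g := L) hdegHr hdegL
    rwa [show N - 1 + 1 = N from by omega] at h2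
  have hreflXN : Polynomial.reflect N (Polynomial.X ^ N * Polynomial.C lam)
      = Polynomial.C lam := by
    rw [show (Polynomial.X ^ N * Polynomial.C lam : Polynomial A)
        = Polynomial.C lam * Polynomial.X ^ N from by ring,
      Polynomial.reflect_C_mul, Polynomial.reflect_monomial, Polynomial.revAt_le le_rfl]
    simp
  have hd2 : d = (-(Polynomial.reflect (N - 1) Hr))
      * (Polynomial.C p * Polynomial.X - Polynomial.C a) - Polynomial.C lam := by
    have h3 : d = Polynomial.reflect N e := by rw [hedef, my_reflect_reflect]
    rw [h3, he, my_reflect_sub, hreflHrL, hrefl1L, hreflXN]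
    ring
  refine ⟨Hq, -(Polynomial.reflect (N - 1) Hr), ?_⟩
  rw [hf, hc, hd2]
  simp only [map_add, map_sub, map_mul, map_neg, Polynomial.aeval_X, Polynomial.aeval_C,
    MvPolynomial.algebraMap_eq, hLdef]
  ring
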